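/- For distinct nodes x_{i-1} < x_i < x_{i+1} < x_{i+2}, the cubic Lagrange interpolant p(x) of data (x_j, y_j) equals γ_2(x) q_2(x) + γ_3(x) q_3(x) + γ_4(x) q_4(x), where q_2, q_3, q_4 are the linear interpolants on {x_{i-1}, x_i}, {x_i, x_{i+1}}, {x_{i+1}, x_{i+2}} respectively, and γ_2, γ_3, γ_4 are as defined. -/
import Mathlib


/-- The cubic Lagrange interpolant on four points equals the combination
`γ₂ q₂ + γ₃ q₃ + γ₄ q₄` of the three linear interpolants on the two-point substencils. -/
theorem stmt18 (x0 x1 x2 x3 y0 y1 y2 y3 : ℝ)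
    (h01 : x0 < x1) (h12 : x1 < x2) (h23 : x2 < x3)
    (p : Polynomial ℝ) (hdeg : p.degree ≤ 3)
    (hp0 : p.eval x0 = y0) (hp1 : p.eval x1 = y1)
    (hp2 : p.eval x2 = y2) (hp3 : p.eval x3 = y3) :
    ∀ t : ℝ, p.eval t =
      ((t - x2) * (t - x3) / ((x2 - x0) * (x3 - x0))) *
        ((-y0 * (t - x1) + y1 * (t - x0)) / (x1 - x0)) +
      (-((t - x0) * (t - x3) / (x3 - x0)) * (1 / (x2 - x0) + 1 / (x3 - x1))) *
        ((-y1 * (t - x2) + y2 * (t - x1)) / (x2 - x1)) +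
      ((t - x0) * (t - x1) / ((x3 - x0) * (x3 - x1))) *
        ((-y2 * (t - x3) + y3 * (t - x2)) / (x3 - x2)) := by
  intro t
  have hn : p.natDegree < 4 := by
    rcases eq_or_ne p 0 with rfl | hne
    · simp
    · have := (Polynomial.natDegree_le_iff_degree_le (p := p) (n := 3)).mpr hdeg
      omega
  have heval : ∀ x : ℝ, p.eval x =
      p.coeff 0 + p.coeff 1 * x + p.coeff 2 * x ^ 2 + p.coeff 3 * x ^ 3 := by
    intro x
    rw [Polynomial.eval_eq_sum_range' hn]
    simp [Finset.sum_range_succ]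
    try ring
  subst hp0 hp1 hp2 hp3
  rw [heval, heval, heval, heval, heval]
  have d10 : x1 - x0 ≠ 0 := by linarith
  have d20 : x2 - x0 ≠ 0 := by linarith
  have d30 : x3 - x0 ≠ 0 := by linarith
  have d21 : x2 - x1 ≠ 0 := by linarith
  have d31 : x3 - x1 ≠ 0 := by linarith
  have d32 : x3 - x2 ≠ 0 := by linarith
  field_simp
  ring
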